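/- Fix a privacy budget ε > 0 and a sequence of integers m(N) with 1 ≤ m(N) ≤ N for all N and lim_{N→∞} m(N)/N = 1/(e^{ε/2} + 1). Define the global expected errors Q_g^BRR(N) = (1/N)·Σ_{k=1}^N Q_BRR(k, N, m(N)) and Q_g^GRR(N) = (1/N)·Σ_{k=1}^N Q_GRR(k, N). Then lim_{N→∞} Q_g^BRR(N) / Q_g^GRR(N) = (7·e^{ε/2} + 9) / (4·(e^{ε/2} + 1)²). -/

import Mathlib

open Real Filter Finset

/-- Sum of the `m` smallest elements of the multiset `{|j − k| : j = 1,…,N}`. -/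
def Tm (k N m : ℕ) : ℤ :=
  (((((Finset.Icc 1 N).val.map (fun j => |(j : ℤ) - (k : ℤ)|))).sort (· ≤ ·)).take m).sum

/-- Local expected error of GRR at priori point `k` over `{1,…,N}`. -/
noncomputable def QGRR (ε : ℝ) (k N : ℕ) : ℝ :=
  (∑ j ∈ Finset.Icc 1 N, |(j : ℝ) - (k : ℝ)|) / (Real.exp ε + N - 1)

/-- Local expected error of BRR with parameter `m` at priori point `k` over `{1,…,N}`. -/
noncomputable def QBRR (ε : ℝ) (k N m : ℕ) : ℝ :=
  (Real.exp ε * (Tm k N m : ℝ)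
      + ((∑ j ∈ Finset.Icc 1 N, |(j : ℝ) - (k : ℝ)|) - (Tm k N m : ℝ)))
    / (m * Real.exp ε + N - m)

def gnat (a i : ℕ) : ℕ := if i ≤ 2*a then (i+1)/2 else i - a

def fI : ℕ → ℤ := fun d => (d:ℤ)+1

lemma gnat_mono (a : ℕ) : Monotone (gnat a) := by
  apply monotone_nat_of_le_succ
  intro i
  simp only [gnat]
  split_ifs <;> omega

lemma claim_base (a : ℕ) :
    (Multiset.range (2*a+1)).map (fun i => (gnat a i : ℤ)) =
      (0:ℤ) ::ₘ ((Multiset.range a).map fI + (Multiset.range a).map fI) := by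
  induction a with
  | zero => simp [gnat]
  | succ a ih =>
      have h1 : 2*(a+1)+1 = (2*a+1) + 1 + 1 := by ring
      rw [h1, Multiset.range_succ, Multiset.range_succ, Multiset.map_cons, Multiset.map_cons]
      have h2 : (Multiset.range (2*a+1)).map (fun i => (gnat (a+1) i : ℤ))
          = (Multiset.range (2*a+1)).map (fun i => (gnat a i : ℤ)) := by
        apply Multiset.map_congr rfl
        intro i hi
        rw [Multiset.mem_range] at hi
        simp only [gnat]
        split_ifs <;> omega
      rw [h2, ih]
      have g1 : (gnat (a+1) (2*a+1) : ℤ) = (a:ℤ)+1 := by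
        simp only [gnat]; split_ifs <;> [push_cast; skip] <;> omega
      have g2 : (gnat (a+1) (2*a+1+1) : ℤ) = (a:ℤ)+1 := by
        simp only [gnat]; split_ifs <;> [push_cast; skip] <;> omega
      rw [g1, g2, Multiset.range_succ, Multiset.map_cons]
      show ((a:ℤ)+1) ::ₘ ((a:ℤ)+1) ::ₘ (0:ℤ) ::ₘ _ = (0:ℤ) ::ₘ (fI a ::ₘ _ + (fI a ::ₘ _))
      simp only [fI]
      rw [Multiset.cons_add, Multiset.add_cons]
      simp [Multiset.cons_swap]

lemma claim_step (a b : ℕ) (h : a ≤ b) :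
    (Multiset.range (a+b+1)).map (fun i => (gnat a i : ℤ)) =
      (0:ℤ) ::ₘ ((Multiset.range a).map fI + (Multiset.range b).map fI) := by
  induction b, h using Nat.le_induction with
  | base =>
      have : a + a + 1 = 2*a+1 := by ring
      rw [this, claim_base]
  | succ b hb ih =>
      have h1 : a + (b+1) + 1 = (a + b + 1) + 1 := by ring
      rw [h1, Multiset.range_succ, Multiset.map_cons, ih, Multiset.range_succ,
        Multiset.map_cons, Multiset.add_cons]
      have : (gnat a (a+b+1) : ℤ) = fI b := by
        simp only [gnat, fI]; split_ifs <;> [omega; push_cast] <;> omega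
      rw [this, Multiset.cons_swap]

lemma icc_val (N : ℕ) : (Finset.Icc 1 N).val = (Multiset.range N).map (fun j : ℕ => j+1) := by
  rw [Nat.Icc_eq_range']
  show ((List.range' 1 (N+1-1) : List ℕ) : Multiset ℕ) = _
  have : N + 1 - 1 = N := by omega
  rw [this, List.range'_eq_map_range]
  rw [show (Multiset.range N) = ((List.range N : List ℕ) : Multiset ℕ) from rfl]
  rw [Multiset.map_coe]
  congr 1
  apply List.map_congr_left
  intro i _
  omega

lemma range_cast (k : ℕ) :
    (Multiset.range k).map (fun j : ℕ => (j:ℤ)) = (0:ℤ) ::ₘ (Multiset.range (k-1)).map fI ∨ k = 0 := by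
  rcases Nat.eq_zero_or_pos k with h | h
  · right; exact h
  · left
    have : k = 1 + (k-1) := by omega
    conv_lhs => rw [this]
    rw [Multiset.range_add, Multiset.map_add, Multiset.map_map]
    have : Multiset.range 1 = {0} := rfl
    rw [this]
    simp only [Multiset.map_singleton, Multiset.singleton_add, fI]
    congr 1
    apply Multiset.map_congr rfl
    intro i _
    simp [Function.comp]
    push_cast
    unfold fI
    ring

lemma reflect_range (k : ℕ) :
    (Multiset.range k).map (fun j : ℕ => ((k-1-j : ℕ) : ℤ)) = (Multiset.range k).map (fun j : ℕ => (j:ℤ)) := by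
  have h2 := List.reverse_range' (s := 0) (n := k)
  rw [← List.range_eq_range'] at h2
  have h3 : (List.range k).map (fun j => k-1-j) = (List.range k).reverse := by
    rw [h2]; apply List.map_congr_left; intro i _; omega
  have h4 : (Multiset.range k).map (fun j => k-1-j) = Multiset.range k := by
    show ((List.range k).map (fun j => k-1-j) : Multiset ℕ) = (Multiset.range k)
    rw [h3]; exact Multiset.coe_reverse _
  calc (Multiset.range k).map (fun j : ℕ => ((k-1-j : ℕ) : ℤ))
      = ((Multiset.range k).map (fun j => k-1-j)).map (fun n : ℕ => (n:ℤ)) := (Multiset.map_map _ _ _).symm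
    _ = (Multiset.range k).map (fun j : ℕ => (j:ℤ)) := by rw [h4]

lemma dist_multiset (k N : ℕ) (h1 : 1 ≤ k) (h2 : k ≤ N) :
    (Finset.Icc 1 N).val.map (fun j => |(j : ℤ) - (k : ℤ)|) =
      (0:ℤ) ::ₘ ((Multiset.range (k-1)).map fI + (Multiset.range (N-k)).map fI) := by
  show Multiset.map _ ((Finset.Icc 1 N).val.bind (fun a => {(a : ℤ)})) = _
  rw [Multiset.bind_singleton, Multiset.map_map, icc_val, Multiset.map_map]
  have hN : N = k + (N-k) := by omega
  conv_lhs => rw [hN]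
  rw [Multiset.range_add, Multiset.map_add, Multiset.map_map]
  simp only [Function.comp_def]
  have p1 : (Multiset.range k).map (fun j : ℕ => |((j+1 : ℕ) : ℤ) - (k:ℤ)|)
      = (Multiset.range k).map (fun j : ℕ => ((k-1-j : ℕ) : ℤ)) := by
    apply Multiset.map_congr rfl
    intro j hj
    rw [Multiset.mem_range] at hj
    rw [abs_of_nonpos (by push_cast; omega)]
    push_cast [Nat.cast_sub (by omega : j ≤ k - 1), Nat.cast_sub (by omega : 1 ≤ k)]
    ring
  have p2 : (Multiset.range (N-k)).map (fun j : ℕ => |((k + j + 1 : ℕ) : ℤ) - (k:ℤ)|)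
      = (Multiset.range (N-k)).map fI := by
    apply Multiset.map_congr rfl
    intro j _
    simp only [fI]
    rw [abs_of_nonneg (by push_cast; omega)]
    push_cast
    ring
  rw [p1, p2, reflect_range]
  rcases range_cast k with h | h
  · rw [h, Multiset.cons_add]
  · omega

def Gz (a m : ℕ) : ℤ := ∑ i ∈ Finset.range m, (gnat a i : ℤ)
def Qz (m : ℕ) : ℤ := ∑ i ∈ Finset.range m, (((i+1)/2 : ℕ) : ℤ)
def Dz (m : ℕ) : ℤ := ∑ a ∈ Finset.range m, (Gz a m - Qz m)

lemma list_range_map_sum (m : ℕ) (f : ℕ → ℤ) :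
    ((List.range m).map f).sum = ∑ i ∈ Finset.range m, f i := by
  induction m with
  | zero => simp
  | succ m ih => simp [List.range_succ, Finset.sum_range_succ, ih]

lemma tm_eq (k N m : ℕ) (h1 : 1 ≤ k) (h2 : k ≤ N) (hm : m ≤ N) :
    Tm k N m = Gz (min (k-1) (N-k)) m := by
  unfold Gz
  set a := min (k-1) (N-k) with ha
  set b := max (k-1) (N-k) with hb
  have hab : a + b + 1 = N := by
    rw [ha, hb]; rcases le_total (k-1) (N-k) with h | h <;> simp [min_eq_left, max_eq_right, *] <;> omega
  have hmulti : (Finset.Icc 1 N).val.map (fun j => |(j : ℤ) - (k : ℤ)|)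
      = (Multiset.range N).map (fun i => (gnat a i : ℤ)) := by
    rw [dist_multiset k N h1 h2]
    conv_rhs => rw [← hab]
    rw [claim_step a b (min_le_max)]
    rcases le_total (k-1) (N-k) with h | h
    · rw [ha, hb, min_eq_left h, max_eq_right h]
    · rw [ha, hb, min_eq_right h, max_eq_left h, add_comm (Multiset.map fI (Multiset.range (N-k)))]
  have hsorted : List.Pairwise (· ≤ ·) ((List.range N).map (fun i => (gnat a i : ℤ))) := by
    rw [List.pairwise_map]
    exact (List.pairwise_lt_range (n := N)).imp
      (fun h => Int.ofNat_le.mpr (gnat_mono a (le_of_lt h)))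
  have hperm : List.Perm (Multiset.sort ((Finset.Icc 1 N).val.map (fun j => |(j : ℤ) - (k : ℤ)|)) (· ≤ ·))
      ((List.range N).map (fun i => (gnat a i : ℤ))) := by
    apply Multiset.coe_eq_coe.mp
    rw [Multiset.sort_eq, hmulti]
    rfl
  have hs := List.Perm.eq_of_pairwise' (Multiset.pairwise_sort _ _) hsorted hperm
  rw [Tm, hs, ← List.map_take, List.take_range, min_eq_left hm, list_range_map_sum]


lemma Gz_eq_Qz (a m : ℕ) (h : m ≤ 2*a+1) : Gz a m = Qz m := by
  apply Finset.sum_congr rfl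
  intro i hi
  rw [Finset.mem_range] at hi
  simp only [gnat]
  split_ifs <;> [rfl; omega]

lemma sum_min (N m : ℕ) (hm1 : 1 ≤ m) (hmN : 2*m ≤ N) :
    ∑ k ∈ Finset.Icc 1 N, Gz (min (k-1) (N-k)) m = N * Qz m + 2 * Dz m := by
  have hsplit : ∀ k, Gz (min (k-1) (N-k)) m = Qz m + (Gz (min (k-1) (N-k)) m - Qz m) := by
    intro k; ring
  calc ∑ k ∈ Finset.Icc 1 N, Gz (min (k-1) (N-k)) m
      = ∑ k ∈ Finset.Icc 1 N, (Qz m + (Gz (min (k-1) (N-k)) m - Qz m)) := by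
        exact Finset.sum_congr rfl (fun k _ => hsplit k)
    _ = N * Qz m + ∑ k ∈ Finset.Icc 1 N, (Gz (min (k-1) (N-k)) m - Qz m) := by
        rw [Finset.sum_add_distrib, Finset.sum_const, Nat.card_Icc]
        simp [Nat.add_sub_cancel]
    _ = N * Qz m + 2 * Dz m := by
        congr 1
        have h1 : ∑ k ∈ Finset.Ioc 0 m, (Gz (min (k-1) (N-k)) m - Qz m) = Dz m := by
          rw [← Finset.Icc_add_one_left_eq_Ioc, ← Finset.Ico_add_one_right_eq_Icc, Finset.sum_Ico_eq_sum_range, Dz, zero_add]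
          have : m + 1 - 1 = m := by omega
          rw [this]
          apply Finset.sum_congr rfl
          intro i hi
          rw [Finset.mem_range] at hi
          have : min (1 + i - 1) (N - (1 + i)) = i := by omega
          rw [this]
        have h2 : ∑ k ∈ Finset.Ioc m (N - m), (Gz (min (k-1) (N-k)) m - Qz m) = 0 := by
          apply Finset.sum_eq_zero
          intro k hk
          rw [Finset.mem_Ioc] at hk
          have : Gz (min (k-1) (N-k)) m = Qz m := by
            apply Gz_eq_Qz
            omega
          rw [this]; ring
        have h3 : ∑ k ∈ Finset.Ioc (N - m) N, (Gz (min (k-1) (N-k)) m - Qz m) = Dz m := by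
          rw [← Finset.Icc_add_one_left_eq_Ioc, ← Finset.Ico_add_one_right_eq_Icc, Finset.sum_Ico_eq_sum_range, Dz]
          have e : N + 1 - (N - m + 1) = m := by omega
          rw [e]
          rw [← Finset.sum_range_reflect]
          apply Finset.sum_congr rfl
          intro i hi
          rw [Finset.mem_range] at hi
          have : min (N - m + 1 + (m - 1 - i) - 1) (N - (N - m + 1 + (m - 1 - i))) = i := by omega
          rw [this]
        rw [show Finset.Icc 1 N = Finset.Ioc 0 N from Finset.Icc_add_one_left_eq_Ioc 0 N,
          ← Finset.sum_Ioc_consecutive _ (show (0:ℕ) ≤ m by omega) (show m ≤ N by omega),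
          ← Finset.sum_Ioc_consecutive _ (show m ≤ N - m by omega) (show N - m ≤ N by omega),
          h1, h2, h3]
        ring

lemma qz_nat (m : ℕ) : ∑ i ∈ Finset.range m, (i+1)/2 = m^2/4 := by
  induction m with
  | zero => simp
  | succ m ih =>
      rw [Finset.sum_range_succ, ih]
      rcases Nat.even_or_odd m with ⟨t, ht⟩ | ⟨t, ht⟩
      · subst ht
        have h1 : (t+t)^2 = 4*t^2 := by ring
        have h2 : (t+t+1)^2 = 4*t^2 + 4*t + 1 := by ring
        rw [h1, h2]
        omega
      · subst ht
        have h1 : (2*t+1)^2 = 4*t^2 + 4*t + 1 := by ring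
        have h2 : (2*t+1+1)^2 = 4*t^2 + 8*t + 4 := by ring
        rw [h1, h2]
        omega

lemma qz_eq (m : ℕ) : Qz m = ((m^2/4 : ℕ) : ℤ) := by
  rw [Qz, ← qz_nat]
  push_cast
  rfl

def Vz (i : ℕ) : ℤ := ∑ a ∈ Finset.range ((i+1)/2), ((i:ℤ) - a - (((i+1)/2 : ℕ) : ℤ))

lemma dz_swap (m : ℕ) : Dz m = ∑ i ∈ Finset.range m, Vz i := by
  have h1 : Dz m = ∑ a ∈ Finset.range m, ∑ i ∈ Finset.range m, ((gnat a i : ℤ) - (((i+1)/2 : ℕ) : ℤ)) := by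
    rw [Dz]
    apply Finset.sum_congr rfl
    intro a _
    rw [Gz, Qz, ← Finset.sum_sub_distrib]
  rw [h1, Finset.sum_comm]
  apply Finset.sum_congr rfl
  intro i hi
  rw [Finset.mem_range] at hi
  have h2 : ∀ a ∈ Finset.range m, (gnat a i : ℤ) - (((i+1)/2 : ℕ) : ℤ)
      = if 2*a < i then ((i:ℤ) - a - (((i+1)/2 : ℕ) : ℤ)) else 0 := by
    intro a _
    simp only [gnat]
    split_ifs with h3 h4 h4 <;> push_cast <;> omega
  rw [Finset.sum_congr rfl h2, ← Finset.sum_filter]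
  have h5 : Finset.filter (fun a => 2*a < i) (Finset.range m) = Finset.range ((i+1)/2) := by
    ext a
    simp only [Finset.mem_filter, Finset.mem_range]
    omega
  rw [h5, Vz]

lemma gauss_int (t : ℕ) : (2:ℤ) * (∑ a ∈ Finset.range t, (a:ℤ)) = t*t - t := by
  have h := Finset.sum_range_id_mul_two t
  rcases Nat.eq_zero_or_pos t with h0 | h0
  · subst h0; simp
  · have : ((∑ a ∈ Finset.range t, a : ℕ) : ℤ) * 2 = ((t*(t-1) : ℕ) : ℤ) := by
      exact_mod_cast congrArg (Nat.cast : ℕ → ℤ) h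
    push_cast [Nat.cast_sub h0] at this
    linarith

lemma vz2 (i : ℕ) : 2 * Vz i
    = 2*((((i+1)/2 : ℕ)):ℤ)*i - 3*((((i+1)/2 : ℕ)):ℤ)^2 + ((((i+1)/2 : ℕ)):ℤ) := by
  rw [Vz, Finset.sum_sub_distrib, Finset.sum_sub_distrib, Finset.sum_const, Finset.sum_const,
    Finset.card_range, nsmul_eq_mul, nsmul_eq_mul]
  have := gauss_int ((i+1)/2)
  ring_nf
  ring_nf at this
  linarith

lemma qz_bound (m : ℕ) : |(Qz m : ℝ) - m^2/4| ≤ 1 := by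
  rw [qz_eq]
  have h1 : 4*(m^2/4) ≤ m^2 := by omega
  have h2 : m^2 ≤ 4*(m^2/4) + 3 := by omega
  have c1 : 4*(((((m^2/4 : ℕ)) : ℤ)) : ℝ) ≤ (m:ℝ)^2 := by exact_mod_cast h1
  have c2 : (m:ℝ)^2 ≤ 4*(((((m^2/4 : ℕ)) : ℤ)) : ℝ) + 3 := by exact_mod_cast h2
  rw [abs_le]; constructor <;> linarith

lemma vz_bound (i : ℕ) : |(Vz i : ℝ) - (i:ℝ)^2/8| ≤ 2*(i:ℝ) + 2 := by
  have h := vz2 i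
  have h1 : i ≤ 2*((i+1)/2) := by omega
  have h2 : 2*((i+1)/2) ≤ i+1 := by omega
  set t := (i+1)/2 with ht
  have hc : 2*((Vz i : ℝ)) = 2*(t:ℝ)*i - 3*(t:ℝ)^2 + t := by exact_mod_cast h
  have c1 : (i:ℝ) ≤ 2*t := by exact_mod_cast h1
  have c2 : 2*((t:ℝ)) ≤ i+1 := by exact_mod_cast h2
  have c0 : (0:ℝ) ≤ i := Nat.cast_nonneg i
  rw [abs_le]; constructor <;> nlinarith [mul_nonneg (by linarith : (0:ℝ) ≤ 2*(t:ℝ) - i) (by linarith : (0:ℝ) ≤ (i:ℝ)+1 - 2*t), sq_nonneg (2*(t:ℝ) - i)]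

lemma sum_lin_real (m : ℕ) : ∑ i ∈ Finset.range m, (i:ℝ) = m*((m:ℝ)-1)/2 := by
  have h := gauss_int m
  have hc : (2:ℝ) * (∑ a ∈ Finset.range m, (a:ℝ)) = (m:ℝ)*m - m := by
    have h2 := congrArg (Int.cast : ℤ → ℝ) h
    push_cast at h2
    exact h2
  linarith

lemma sum_sq_real (m : ℕ) : ∑ i ∈ Finset.range m, (i:ℝ)^2 = (m:ℝ)*((m:ℝ)-1)*(2*(m:ℝ)-1)/6 := by
  induction m with
  | zero => simp
  | succ m ih => rw [Finset.sum_range_succ, ih]; push_cast; ring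

lemma dz_bound (m : ℕ) : |(Dz m : ℝ) - (m:ℝ)^3/24| ≤ 3*(m:ℝ)^2 + m + 1 := by
  have hD : (Dz m : ℝ) = ∑ i ∈ Finset.range m, (Vz i : ℝ) := by
    rw [dz_swap]; push_cast; rfl
  have h1 : |∑ i ∈ Finset.range m, ((Vz i : ℝ) - (i:ℝ)^2/8)| ≤ ∑ i ∈ Finset.range m, (2*(i:ℝ)+2) :=
    (Finset.abs_sum_le_sum_abs _ _).trans (Finset.sum_le_sum (fun i _ => vz_bound i))
  have h2 : ∑ i ∈ Finset.range m, (2*(i:ℝ)+2) = (m:ℝ)^2 + m := by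
    rw [Finset.sum_add_distrib, Finset.sum_const, Finset.card_range, ← Finset.mul_sum, sum_lin_real]
    push_cast; ring
  have h3 : ∑ i ∈ Finset.range m, ((Vz i : ℝ) - (i:ℝ)^2/8)
      = (Dz m : ℝ) - (∑ i ∈ Finset.range m, (i:ℝ)^2)/8 := by
    rw [Finset.sum_sub_distrib, hD, Finset.sum_div]
  rw [h3, h2] at h1
  rw [sum_sq_real] at h1
  have c0 : (0:ℝ) ≤ m := Nat.cast_nonneg m
  rw [abs_le] at h1 ⊢
  constructor <;> nlinarith

lemma sum_dist_row (N : ℕ) : 2 * ∑ k ∈ Finset.Icc 1 N, ((N:ℤ) + 1 - k) = N^2 + N := by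
  have conv1 : ∑ k ∈ Finset.Icc 1 N, ((N:ℤ) + 1 - k) = ∑ i ∈ Finset.range N, ((N:ℤ) - i) := by
    rw [← Finset.Ico_add_one_right_eq_Icc, Finset.sum_Ico_eq_sum_range]
    have : N + 1 - 1 = N := by omega
    rw [this]
    apply Finset.sum_congr rfl
    intro i _
    push_cast
    ring
  rw [conv1, Finset.sum_sub_distrib, Finset.sum_const, Finset.card_range, nsmul_eq_mul]
  have := gauss_int N
  push_cast
  ring_nf
  ring_nf at this
  linarith

lemma double_sum_dist (N : ℕ) :
    3 * ∑ k ∈ Finset.Icc 1 N, ∑ j ∈ Finset.Icc 1 N, |(j:ℤ) - (k:ℤ)| = N^3 - N := by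
  induction N with
  | zero => simp
  | succ N ih =>
      have hnotmem : (N+1) ∉ Finset.Icc 1 N := by simp
      have hins : Finset.Icc 1 (N+1) = insert (N+1) (Finset.Icc 1 N) := by
        ext x; simp [Finset.mem_Icc]; omega
      rw [hins]
      simp only [Finset.sum_insert hnotmem]
      rw [Finset.sum_add_distrib]
      have habs1 : ∑ j ∈ Finset.Icc 1 N, |(j:ℤ) - ((N+1:ℕ):ℤ)|
          = ∑ k ∈ Finset.Icc 1 N, ((N:ℤ) + 1 - k) := by
        apply Finset.sum_congr rfl
        intro j hj
        rw [Finset.mem_Icc] at hj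
        rw [abs_of_nonpos (by push_cast; omega)]
        push_cast
        ring
      have habs2 : ∑ k ∈ Finset.Icc 1 N, |((N+1:ℕ):ℤ) - (k:ℤ)|
          = ∑ k ∈ Finset.Icc 1 N, ((N:ℤ) + 1 - k) := by
        apply Finset.sum_congr rfl
        intro k hk
        rw [Finset.mem_Icc] at hk
        rw [abs_of_nonneg (by push_cast; omega)]
        push_cast
        ring
      push_cast at habs1 habs2 ⊢
      rw [habs1, habs2]
      have hg := sum_dist_row N
      push_cast at ih hg
      simp only [sub_self, abs_zero]
      linear_combination ih + 3*hg

lemma sum_abs_real (N : ℕ) :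
    ∑ k ∈ Finset.Icc 1 N, ∑ j ∈ Finset.Icc 1 N, |(j : ℝ) - (k : ℝ)| = ((N:ℝ)^3 - N)/3 := by
  have h := congrArg (Int.cast : ℤ → ℝ) (double_sum_dist N)
  push_cast at h
  linarith

set_option maxHeartbeats 2000000 in
/-- If `m(N)/N → 1/(e^{ε/2}+1)`, then the ratio of the global expected error of BRR,
`Q_g^BRR(N) = (1/N)·Σ_{k=1}^N Q_BRR(k,N,m(N))`, to that of GRR,
`Q_g^GRR(N) = (1/N)·Σ_{k=1}^N Q_GRR(k,N)`, tends to
`(7·e^{ε/2} + 9)/(4·(e^{ε/2} + 1)²)` as `N → ∞`. -/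
theorem brr_grr_global_ratio_limit (ε : ℝ) (hε : 0 < ε) (m : ℕ → ℕ)
    (hm : ∀ N, 1 ≤ N → 1 ≤ m N ∧ m N ≤ N)
    (hlim : Tendsto (fun N : ℕ => (m N : ℝ) / (N : ℝ)) atTop
      (nhds (1 / (Real.exp (ε / 2) + 1)))) :
    Tendsto (fun N : ℕ =>
        ((1 / (N : ℝ)) * ∑ k ∈ Finset.Icc 1 N, QBRR ε k N (m N))
          / ((1 / (N : ℝ)) * ∑ k ∈ Finset.Icc 1 N, QGRR ε k N))
      atTop (nhds ((7 * Real.exp (ε / 2) + 9) / (4 * (Real.exp (ε / 2) + 1) ^ 2))) := by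
  set E : ℝ := Real.exp (ε/2) with hEdef
  set c : ℝ := 1/(E+1) with hcdef
  have hE : 1 < E := by
    rw [hEdef]
    have := Real.exp_lt_exp.mpr (show (0:ℝ) < ε/2 by linarith)
    simpa using this
  have hexpε : Real.exp ε = E^2 := by
    rw [hEdef, sq, ← Real.exp_add]
    norm_num
  have hc0 : 0 < c := by rw [hcdef]; positivity
  have hc2 : c < 1/2 := by
    rw [hcdef]
    rw [div_lt_div_iff₀ (by linarith) (by norm_num)]
    linarith
  -- m N → ∞
  have hm_top : Tendsto (fun N : ℕ => (m N : ℝ)) atTop atTop := by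
    apply tendsto_atTop_mono' atTop (f₁ := fun N : ℕ => (c/2) * (N:ℝ))
    · filter_upwards [hlim.eventually_const_lt (show c/2 < c by linarith),
        eventually_ge_atTop 1] with N h1 h2
      have hN0 : (0:ℝ) < N := by
        have : (1:ℝ) ≤ N := by exact_mod_cast h2
        linarith
      rw [div_lt_div_iff₀ (by norm_num : (0:ℝ) < 2) hN0] at h1
      nlinarith
    · exact Tendsto.const_mul_atTop (by linarith) tendsto_natCast_atTop_atTop
  -- eventual structural facts
  have hev : ∀ᶠ N in atTop, 2 * m N ≤ N ∧ 1 ≤ m N ∧ 2 ≤ N := by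
    filter_upwards [hlim.eventually_lt_const hc2, eventually_ge_atTop 2] with N h1 h2
    have hN0 : (0:ℝ) < N := by
      have : (2:ℝ) ≤ N := by exact_mod_cast h2
      linarith
    have hmlt : (m N : ℝ) < N/2 := by
      rw [div_lt_iff₀ hN0] at h1
      linarith
    have : 2 * m N < N := by
      have : (2 * m N : ℝ) < N := by push_cast; linarith
      exact_mod_cast this
    exact ⟨by omega, (hm N (by omega)).1, h2⟩
  -- component limits
  have hq : Tendsto (fun N : ℕ => (Qz (m N) : ℝ)/(m N : ℝ)^2) atTop (nhds (1/4)) := by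
    have h0 : Tendsto (fun N : ℕ => (Qz (m N) : ℝ)/(m N : ℝ)^2 - 1/4) atTop (nhds 0) := by
      apply squeeze_zero_norm' (a := fun N : ℕ => ((m N : ℝ)^2)⁻¹)
      · filter_upwards [hev] with N hN
        have hm1 : (1:ℝ) ≤ (m N : ℝ) := by exact_mod_cast hN.2.1
        have hb := qz_bound (m N)
        have hpos : (0:ℝ) < (m N : ℝ)^2 := by positivity
        rw [Real.norm_eq_abs]
        have : (Qz (m N) : ℝ)/(m N : ℝ)^2 - 1/4 = ((Qz (m N) : ℝ) - (m N : ℝ)^2/4)/(m N:ℝ)^2 := by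
          field_simp
          try exact Or.inl (by ring)
        rw [this, abs_div, abs_of_pos hpos, div_le_iff₀ hpos]
        rw [inv_mul_cancel₀ (ne_of_gt hpos)]
        exact hb
      · exact Tendsto.inv_tendsto_atTop (by
          apply tendsto_atTop_mono' atTop (f₁ := fun N : ℕ => (m N : ℝ))
          · filter_upwards [hev] with N hN
            have hm1 : (1:ℝ) ≤ (m N : ℝ) := by exact_mod_cast hN.2.1
            nlinarith
          · exact hm_top)
    have h1 := h0.add_const (1/4)
    rw [zero_add] at h1
    exact h1.congr (fun N => by ring)
  have hd : Tendsto (fun N : ℕ => (Dz (m N) : ℝ)/(m N : ℝ)^3) atTop (nhds (1/24)) := by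
    have h0 : Tendsto (fun N : ℕ => (Dz (m N) : ℝ)/(m N : ℝ)^3 - 1/24) atTop (nhds 0) := by
      apply squeeze_zero_norm' (a := fun N : ℕ => 5 * ((m N : ℝ))⁻¹)
      · filter_upwards [hev] with N hN
        have hm1 : (1:ℝ) ≤ (m N : ℝ) := by exact_mod_cast hN.2.1
        have hb := dz_bound (m N)
        have hpos : (0:ℝ) < (m N : ℝ)^3 := by positivity
        rw [Real.norm_eq_abs]
        have : (Dz (m N) : ℝ)/(m N : ℝ)^3 - 1/24 = ((Dz (m N) : ℝ) - (m N : ℝ)^3/24)/(m N:ℝ)^3 := by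
          field_simp
          try exact Or.inl (by ring)
        rw [this, abs_div, abs_of_pos hpos, div_le_iff₀ hpos]
        have h5 : 5 * ((m N : ℝ))⁻¹ * (m N:ℝ)^3 = 5 * (m N:ℝ)^2 := by
          field_simp
        rw [h5]
        nlinarith [abs_nonneg ((Dz (m N) : ℝ) - (m N : ℝ)^3/24)]
      · have := Tendsto.inv_tendsto_atTop hm_top
        have h2 := this.const_mul (5:ℝ)
        rw [mul_zero] at h2
        exact h2
    have h1 := h0.add_const (1/24)
    rw [zero_add] at h1
    exact h1.congr (fun N => by ring)
  have hinv : Tendsto (fun N : ℕ => ((N:ℝ))⁻¹) atTop (nhds 0) :=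
    tendsto_natCast_atTop_atTop.inv_tendsto_atTop
  -- limit of normalized Tm-sum
  have hS : Tendsto (fun N : ℕ => (∑ k ∈ Finset.Icc 1 N, (Tm k N (m N) : ℝ))/(N:ℝ)^3)
      atTop (nhds (c^2/4 + c^3/12)) := by
    have hf : Tendsto (fun N : ℕ => ((Qz (m N):ℝ)/(m N:ℝ)^2) * ((m N:ℝ)/(N:ℝ))^2
        + 2*(((Dz (m N):ℝ)/(m N:ℝ)^3) * ((m N:ℝ)/(N:ℝ))^3))
        atTop (nhds ((1/4)*c^2 + 2*((1/24)*c^3))) :=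
      (hq.mul (hlim.pow 2)).add ((hd.mul (hlim.pow 3)).const_mul 2)
    have heq : (1/4)*c^2 + 2*((1/24)*c^3) = c^2/4 + c^3/12 := by ring
    rw [heq] at hf
    apply hf.congr'
    filter_upwards [hev] with N hN
    obtain ⟨h2m, hm1, hN2⟩ := hN
    have hsumZ : (∑ k ∈ Finset.Icc 1 N, Tm k N (m N)) = N * Qz (m N) + 2 * Dz (m N) := by
      exact (Finset.sum_congr rfl (fun k hk => by
        rw [Finset.mem_Icc] at hk
        exact tm_eq k N (m N) hk.1 hk.2 (by omega))).trans (sum_min N (m N) hm1 h2m)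
    have hcast : (∑ k ∈ Finset.Icc 1 N, (Tm k N (m N) : ℝ))
        = ((N:ℝ)) * (Qz (m N):ℝ) + 2 * (Dz (m N):ℝ) := by
      have hc2 := congrArg (Int.cast : ℤ → ℝ) hsumZ
      push_cast at hc2
      exact hc2
    rw [hcast]
    have hm0 : (m N:ℝ) ≠ 0 := by positivity
    have hN0 : (N:ℝ) ≠ 0 := by
      have : (2:ℝ) ≤ (N:ℝ) := by exact_mod_cast hN2
      linarith
    field_simp
  -- limit of normalized |j-k| double sum
  have hA_lim : Tendsto (fun N : ℕ =>
      (∑ k ∈ Finset.Icc 1 N, ∑ j ∈ Finset.Icc 1 N, |(j : ℝ) - (k : ℝ)|)/(N:ℝ)^3)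
      atTop (nhds (1/3)) := by
    have hf : Tendsto (fun N : ℕ => ((1:ℝ) - ((N:ℝ))⁻¹ * ((N:ℝ))⁻¹)/3)
        atTop (nhds (((1:ℝ) - 0 * 0)/3)) :=
      ((tendsto_const_nhds.sub (hinv.mul hinv)).div_const 3)
    have heq : ((1:ℝ) - 0 * 0)/3 = 1/3 := by norm_num
    rw [heq] at hf
    apply hf.congr'
    filter_upwards [eventually_ge_atTop 1] with N hN1
    have hN0 : (N:ℝ) ≠ 0 := by
      have : (1:ℝ) ≤ (N:ℝ) := by exact_mod_cast hN1
      linarith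
    rw [sum_abs_real]
    field_simp
  -- denominators
  have hDen : Tendsto (fun N : ℕ => ((m N:ℝ) * Real.exp ε + (N:ℝ) - (m N:ℝ))/(N:ℝ))
      atTop (nhds E) := by
    have hf := ((hlim.mul_const (Real.exp ε)).add_const 1).sub hlim
    have hval : c * Real.exp ε + 1 - c = E := by
      rw [hexpε, hcdef]
      have hE1 : E + 1 ≠ 0 := by linarith
      field_simp
      ring
    rw [hval] at hf
    apply hf.congr'
    filter_upwards [eventually_ge_atTop 1] with N hN1
    have hN0 : (N:ℝ) ≠ 0 := by
      have : (1:ℝ) ≤ (N:ℝ) := by exact_mod_cast hN1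
      linarith
    field_simp
  have hGden : Tendsto (fun N : ℕ => (Real.exp ε + (N:ℝ) - 1)/(N:ℝ)) atTop (nhds 1) := by
    have hf := (hinv.const_mul (Real.exp ε - 1)).add_const 1
    rw [mul_zero, zero_add] at hf
    apply hf.congr'
    filter_upwards [eventually_ge_atTop 1] with N hN1
    have hN0 : (N:ℝ) ≠ 0 := by
      have : (1:ℝ) ≤ (N:ℝ) := by exact_mod_cast hN1
      linarith
    field_simp
    ring
  -- final assembly
  have hexp1 : 1 < Real.exp ε := by
    rw [hexpε]; nlinarith
  have hL3 : E * (1/3) ≠ 0 := by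
    have : (0:ℝ) < E := by linarith
    positivity
  have hbig := ((((hS.const_mul (Real.exp ε - 1)).add hA_lim).mul hGden).div
    (hDen.mul hA_lim)) hL3
  have hvalue : ((Real.exp ε - 1) * (c^2/4 + c^3/12) + 1/3) * 1 / (E * (1/3))
      = (7 * E + 9) / (4 * (E + 1) ^ 2) := by
    rw [hexpε, hcdef]
    have hE1 : E + 1 ≠ 0 := by linarith
    have hE0 : E ≠ 0 := by linarith
    field_simp
    ring
  rw [hvalue] at hbig
  apply hbig.congr'
  filter_upwards [hev] with N hN
  obtain ⟨h2m, hm1, hN2⟩ := hN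
  have hN0 : (0:ℝ) < (N:ℝ) := by
    have : (2:ℝ) ≤ (N:ℝ) := by exact_mod_cast hN2
    linarith
  have hm1' : (1:ℝ) ≤ (m N : ℝ) := by exact_mod_cast hm1
  have hDn0 : (0:ℝ) < (m N:ℝ) * Real.exp ε + (N:ℝ) - (m N:ℝ) := by nlinarith
  have hG0 : (0:ℝ) < Real.exp ε + (N:ℝ) - 1 := by nlinarith
  have hA0 : (0:ℝ) < (N:ℝ)^3 - (N:ℝ) := by
    have h2 : (2:ℝ) ≤ (N:ℝ) := by exact_mod_cast hN2
    nlinarith [mul_pos (mul_pos hN0 (by linarith : (0:ℝ) < (N:ℝ) - 1))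
      (by linarith : (0:ℝ) < (N:ℝ) + 1)]
  have hQB : ∑ k ∈ Finset.Icc 1 N, QBRR ε k N (m N)
      = ((Real.exp ε - 1) * (∑ k ∈ Finset.Icc 1 N, (Tm k N (m N):ℝ))
          + (∑ k ∈ Finset.Icc 1 N, ∑ j ∈ Finset.Icc 1 N, |(j : ℝ) - (k : ℝ)|))
        / ((m N:ℝ) * Real.exp ε + (N:ℝ) - (m N:ℝ)) := by
    simp only [QBRR]
    rw [← Finset.sum_div]
    congr 1
    rw [Finset.sum_congr rfl (fun k _ => show Real.exp ε * (Tm k N (m N) : ℝ)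
        + ((∑ j ∈ Finset.Icc 1 N, |(j : ℝ) - (k : ℝ)|) - (Tm k N (m N) : ℝ))
        = (Real.exp ε - 1) * (Tm k N (m N) : ℝ) + ∑ j ∈ Finset.Icc 1 N, |(j : ℝ) - (k : ℝ)|
        from by ring), Finset.sum_add_distrib, ← Finset.mul_sum]
  have hQG : ∑ k ∈ Finset.Icc 1 N, QGRR ε k N
      = (∑ k ∈ Finset.Icc 1 N, ∑ j ∈ Finset.Icc 1 N, |(j : ℝ) - (k : ℝ)|)
        / (Real.exp ε + (N:ℝ) - 1) := by
    simp only [QGRR]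
    rw [← Finset.sum_div]
  rw [sum_abs_real] at hQB hQG
  simp only [Pi.div_apply]
  rw [hQB, hQG, sum_abs_real]
  field_simp
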